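/- Let x_b ∈ I and let M ≥ 2 be an even integer. Let p be the unique polynomial of degree at most M−1 such that p(h)·𝔈_1(h) − 1 = O(h^M) as h → 0 (the degree-(M−1) truncation of the formal power series inverse of 𝔈_1). Define the stencil coefficients c_1(h) := −p(h), c_{−1}(h) := −p(−h), c_0(h) := p(h)·𝔈_0(h) + p(−h)·𝔈_0(−h), and, for 0 ≤ ℓ ≤ M−2, d_ℓ(h) := −δ_{ℓ,0} − p(h)·𝔉_ℓ(h) − (−1)^ℓ·p(−h)·𝔉_ℓ(−h), where δ_{ℓ,0} = 1 if ℓ = 0 and 0 otherwise. Then for every infinitely differentiable u : I → ℂ satisfying (a u')' + k u = f on I, one has, as h → 0: c_{−1}(h)·u(x_b−h) + c_0(h)·u(x_b) + c_1(h)·u(x_b+h) − h²·Σ_{ℓ=0}^{M−2} d_ℓ(h)·h^ℓ·f^{(ℓ)}(x_b) − h²·f(x_b) = O(h^{M+2}); that is, this compact finite difference scheme has accuracy order M (and numerical dispersion order M) at the base point x_b. -/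

import Mathlib

open Filter Topology Asymptotics

/-- `Ecoef a k n = (E_{n+2,0}, E_{n+2,1})` from the recursion of the paper. -/
noncomputable def Ecoef (a : ℝ → ℝ) (k : ℝ → ℂ) : ℕ → (ℝ → ℂ) × (ℝ → ℂ)
  | 0 => (fun x => -k x / (a x : ℂ), fun x => -((deriv a x : ℝ) : ℂ) / (a x : ℂ))
  | n + 1 =>
      (fun x => deriv (Ecoef a k n).1 x - k x / (a x : ℂ) * (Ecoef a k n).2 x,
       fun x => (Ecoef a k n).1 x + deriv (Ecoef a k n).2 x
          - ((deriv a x : ℝ) : ℂ) / (a x : ℂ) * (Ecoef a k n).2 x)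

/-- `E_{j,0}` for `j ≥ 2` (junk value for `j < 2`). -/
noncomputable def Ej0 (a : ℝ → ℝ) (k : ℝ → ℂ) (j : ℕ) : ℝ → ℂ := (Ecoef a k (j - 2)).1

/-- `E_{j,1}` for `j ≥ 2` (junk value for `j < 2`). -/
noncomputable def Ej1 (a : ℝ → ℝ) (k : ℝ → ℂ) (j : ℕ) : ℝ → ℂ := (Ecoef a k (j - 2)).2

/-- `Fcoef a k n m = F_{n+2, m-1}` (second index shifted by one: `m = ℓ + 1`, `ℓ ≥ -1`). -/
noncomputable def Fcoef (a : ℝ → ℝ) (k : ℝ → ℂ) : ℕ → ℕ → ℝ → ℂ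
  | 0, 0 => fun x => (Ecoef a k 0).2 x / (a x : ℂ)
  | 0, 1 => fun x => 1 / (a x : ℂ)
  | 0, _ + 2 => fun _ => 0
  | n + 1, 0 => fun x => (Ecoef a k (n + 1)).2 x / (a x : ℂ)
  | n + 1, m + 1 => fun x => deriv (Fcoef a k n (m + 1)) x + Fcoef a k n m x

/-- `F_{j,ℓ}` for `j ≥ 2`, `ℓ ≥ 0` (junk value for `j < 2`). -/
noncomputable def Fjl (a : ℝ → ℝ) (k : ℝ → ℂ) (j ℓ : ℕ) : ℝ → ℂ := Fcoef a k (j - 2) (ℓ + 1)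

/-- `𝔈₀(h) = 1 + ∑_{j=2}^{B} E_{j,0}(x_b) h^j / j!`. -/
noncomputable def EPoly0 (a : ℝ → ℝ) (k : ℝ → ℂ) (xb : ℝ) (B : ℕ) (h : ℝ) : ℂ :=
  1 + ∑ j ∈ Finset.Icc 2 B, Ej0 a k j xb * (h : ℂ) ^ j / (Nat.factorial j : ℂ)

/-- `𝔈₁(h) = 1 + ∑_{j=2}^{B} E_{j,1}(x_b) h^(j-1) / j!`. -/
noncomputable def EPoly1 (a : ℝ → ℝ) (k : ℝ → ℂ) (xb : ℝ) (B : ℕ) (h : ℝ) : ℂ :=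
  1 + ∑ j ∈ Finset.Icc 2 B, Ej1 a k j xb * (h : ℂ) ^ (j - 1) / (Nat.factorial j : ℂ)

/-- `𝔉_ℓ(h) = ∑_{j=ℓ+2}^{B} F_{j,ℓ}(x_b) h^(j-ℓ-2) / j!`. -/
noncomputable def FPoly (a : ℝ → ℝ) (k : ℝ → ℂ) (xb : ℝ) (ℓ B : ℕ) (h : ℝ) : ℂ :=
  ∑ j ∈ Finset.Icc (ℓ + 2) B, Fjl a k j ℓ xb * (h : ℂ) ^ (j - ℓ - 2) / (Nat.factorial j : ℂ)

/-! ### Auxiliary lemmas -/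

section Aux
open Set Polynomial

set_option linter.unusedSectionVars false

lemma myIDW {g : ℝ → ℂ} {v s : Set ℝ} (hv : IsOpen v) (hg : ContDiffOn ℝ (⊤:ℕ∞) g v)
    (hs : UniqueDiffOn ℝ s) (hsv : s ⊆ v) (n : ℕ) :
    ∀ x ∈ s, iteratedDerivWithin n g s x = iteratedDeriv n g x := by
  have hopen : ∀ m : ℕ, ∀ x ∈ v, iteratedDerivWithin m g v x = iteratedDeriv m g x := by
    intro m x hx
    rw [iteratedDerivWithin_eq_iteratedFDerivWithin, iteratedDeriv_eq_iteratedFDeriv,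
      iteratedFDerivWithin_of_isOpen m hv hx]
  have hdiff : ∀ m : ℕ, ∀ x ∈ v, DifferentiableAt ℝ (iteratedDeriv m g) x := by
    intro m x hx
    have h1 : DifferentiableWithinAt ℝ (iteratedDerivWithin m g v) v x :=
      hg.differentiableOn_iteratedDerivWithin (by exact_mod_cast WithTop.coe_lt_top m)
        hv.uniqueDiffOn x hx
    have h2 : DifferentiableAt ℝ (iteratedDerivWithin m g v) x := h1.differentiableAt (hv.mem_nhds hx)
    apply h2.congr_of_eventuallyEq
    filter_upwards [hv.mem_nhds hx] with y hy
    exact (hopen m y hy).symm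
  induction n with
  | zero => intro x hx; simp
  | succ n ih =>
    intro x hx
    rw [iteratedDerivWithin_succ, derivWithin_congr (fun y hy => ih y hy) (ih x hx),
      (hdiff n x (hsv hx)).derivWithin (hs x hx), iteratedDeriv_succ]

lemma taylorO {g : ℝ → ℂ} {v : Set ℝ} (hv : IsOpen v) (hg : ContDiffOn ℝ (⊤:ℕ∞) g v)
    {xb : ℝ} (hxb : xb ∈ v) (N : ℕ) :
    (fun h : ℝ => g (xb + h) - ∑ j ∈ Finset.range (N+1),
        (h:ℂ)^j / (Nat.factorial j : ℂ) * iteratedDeriv j g xb) =O[𝓝 (0:ℝ)]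
      (fun h : ℝ => h ^ (N+1)) := by
  obtain ⟨ε, hε, hball⟩ := Metric.isOpen_iff.1 hv xb hxb
  set δ := ε/2 with hδdef
  have hδ : 0 < δ := by positivity
  set G : ℝ → ℂ := fun t => g (xb + t) with hGdef
  set G2 : ℝ → ℂ := fun t => G (-t) with hG2def
  have hvG : IsOpen ((fun t => xb + t) ⁻¹' v) := hv.preimage (by continuity)
  have hvG2 : IsOpen ((fun t : ℝ => -t) ⁻¹' ((fun t => xb + t) ⁻¹' v)) :=
    hvG.preimage (by continuity)
  have hG : ContDiffOn ℝ (⊤:ℕ∞) G ((fun t => xb + t) ⁻¹' v) :=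
    hg.comp ((contDiff_const.add contDiff_id).contDiffOn) (fun y hy => hy)
  have hG2 : ContDiffOn ℝ (⊤:ℕ∞) G2 ((fun t : ℝ => -t) ⁻¹' ((fun t => xb + t) ⁻¹' v)) :=
    hG.comp (contDiff_neg.contDiffOn) (fun y hy => hy)
  have hsub : Icc (0:ℝ) δ ⊆ (fun t => xb + t) ⁻¹' v := by
    intro y hy
    simp only [mem_preimage]
    apply hball
    simp only [Metric.mem_ball, Real.dist_eq, add_sub_cancel_left]
    have := hy.1; have := hy.2
    rw [abs_lt]; constructor <;> [linarith; linarith]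
  have hsub2 : Icc (0:ℝ) δ ⊆ (fun t : ℝ => -t) ⁻¹' ((fun t => xb + t) ⁻¹' v) := by
    intro y hy
    simp only [mem_preimage]
    apply hball
    simp only [Metric.mem_ball, Real.dist_eq, add_sub_cancel_left]
    have := hy.1; have := hy.2
    rw [abs_lt]; constructor <;> [linarith; linarith]
  obtain ⟨C₁, hC₁⟩ := exists_taylor_mean_remainder_bound (n := N) hδ.le
    ((hG.mono hsub).of_le (by exact_mod_cast le_top))
  obtain ⟨C₂, hC₂⟩ := exists_taylor_mean_remainder_bound (n := N) hδ.le
    ((hG2.mono hsub2).of_le (by exact_mod_cast le_top))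
  have hDG : ∀ j, iteratedDeriv j G 0 = iteratedDeriv j g xb := by
    intro j
    have := iteratedDeriv_comp_const_add j g xb
    rw [hGdef]
    rw [show (fun t => g (xb + t)) = (fun z => g (xb + z)) from rfl, this]
    simp
  have hDG2 : ∀ j, iteratedDeriv j G2 0 = (-1:ℝ)^j • iteratedDeriv j g xb := by
    intro j
    rw [hG2def, iteratedDeriv_comp_neg, neg_zero, hDG]
  have hTG : ∀ t ∈ Icc (0:ℝ) δ, taylorWithinEval G N (Icc 0 δ) 0 t
      = ∑ j ∈ Finset.range (N+1), ((Nat.factorial j : ℝ)⁻¹ * t ^ j) • iteratedDeriv j g xb := by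
    intro t ht
    rw [taylor_within_apply]
    refine Finset.sum_congr rfl fun j hj => ?_
    rw [myIDW hvG hG (uniqueDiffOn_Icc hδ) hsub j 0 (by constructor <;> [rfl; exact hδ.le]), hDG]
    simp
  have hTG2 : ∀ t ∈ Icc (0:ℝ) δ, taylorWithinEval G2 N (Icc 0 δ) 0 t
      = ∑ j ∈ Finset.range (N+1), ((Nat.factorial j : ℝ)⁻¹ * t ^ j * (-1:ℝ)^j) • iteratedDeriv j g xb := by
    intro t ht
    rw [taylor_within_apply]
    refine Finset.sum_congr rfl fun j hj => ?_
    rw [myIDW hvG2 hG2 (uniqueDiffOn_Icc hδ) hsub2 j 0 (by constructor <;> [rfl; exact hδ.le]), hDG2]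
    rw [smul_smul]
    simp [mul_comm]
  rw [isBigO_iff]
  refine ⟨max C₁ C₂, ?_⟩
  have hmem : Icc (-δ) δ ∈ 𝓝 (0:ℝ) := Icc_mem_nhds (by linarith) hδ
  filter_upwards [hmem] with h hh
  have habs : |h| ^ (N+1) = ‖h ^ (N+1)‖ := by
    rw [norm_pow, Real.norm_eq_abs]
  rcases le_or_gt 0 h with hpos | hneg
  · have hmem' : h ∈ Icc (0:ℝ) δ := ⟨hpos, hh.2⟩
    have := hC₁ h hmem'
    rw [hTG h hmem'] at this
    have heq : G h - ∑ j ∈ Finset.range (N+1), ((Nat.factorial j : ℝ)⁻¹ * h ^ j) • iteratedDeriv j g xb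
        = g (xb + h) - ∑ j ∈ Finset.range (N+1), (h:ℂ)^j / (Nat.factorial j : ℂ) * iteratedDeriv j g xb := by
      rw [hGdef]
      congr 1
      refine Finset.sum_congr rfl fun j hj => ?_
      rw [Complex.real_smul]
      push_cast
      ring
    rw [heq, sub_zero] at this
    calc ‖_‖ ≤ C₁ * h ^ (N+1) := this
      _ ≤ max C₁ C₂ * ‖h ^ (N+1)‖ := by
          rw [← habs, abs_of_nonneg hpos]
          exact mul_le_mul_of_nonneg_right (le_max_left _ _) (by positivity)
  · have hmem' : -h ∈ Icc (0:ℝ) δ := ⟨by linarith, by have := hh.1; linarith⟩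
    have := hC₂ (-h) hmem'
    rw [hTG2 (-h) hmem'] at this
    have heq : G2 (-h) - ∑ j ∈ Finset.range (N+1), ((Nat.factorial j : ℝ)⁻¹ * (-h) ^ j * (-1:ℝ)^j) • iteratedDeriv j g xb
        = g (xb + h) - ∑ j ∈ Finset.range (N+1), (h:ℂ)^j / (Nat.factorial j : ℂ) * iteratedDeriv j g xb := by
      rw [hG2def, hGdef]
      simp only [neg_neg]
      congr 1
      refine Finset.sum_congr rfl fun j hj => ?_
      rw [mul_assoc, ← mul_pow, neg_mul_neg, mul_one, Complex.real_smul]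
      push_cast
      ring
    rw [heq, sub_zero] at this
    calc ‖_‖ ≤ C₂ * (-h) ^ (N+1) := this
      _ ≤ max C₁ C₂ * ‖h ^ (N+1)‖ := by
          rw [← habs, abs_of_neg hneg]
          exact mul_le_mul_of_nonneg_right (le_max_right _ _) (pow_nonneg (by linarith) _)

section ODE
variable {p q : ℝ} {a : ℝ → ℝ} {k : ℝ → ℂ}
  (ha : ContDiffOn ℝ (⊤ : ℕ∞) a (Set.Ioo p q))
  (hk : ContDiffOn ℝ (⊤ : ℕ∞) k (Set.Ioo p q))
  (hapos : ∀ x ∈ Set.Ioo p q, 0 < a x)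

theorem myDiv {f g : ℝ → ℂ} {s : Set ℝ} (hf : ContDiffOn ℝ (⊤:ℕ∞) f s)
    (hg : ContDiffOn ℝ (⊤:ℕ∞) g s) (hne : ∀ x ∈ s, g x ≠ 0) :
    ContDiffOn ℝ (⊤:ℕ∞) (fun x => f x / g x) s := by
  simp only [div_eq_mul_inv]
  exact hf.mul (hg.inv hne)

theorem infle : (⊤:ℕ∞) + 1 ≤ ((⊤:ℕ∞) : WithTop ℕ∞) := by
  norm_num

include ha in
theorem hca : ContDiffOn ℝ (⊤:ℕ∞) (fun x => ((a x : ℝ) : ℂ)) (Set.Ioo p q) :=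
  Complex.ofRealCLM.contDiff.comp_contDiffOn ha

include hapos in
theorem hane : ∀ x ∈ Set.Ioo p q, ((a x : ℝ) : ℂ) ≠ 0 := by
  intro x hx
  exact_mod_cast (hapos x hx).ne'

include ha in
theorem hcda : ContDiffOn ℝ (⊤:ℕ∞) (fun x => ((deriv a x : ℝ) : ℂ)) (Set.Ioo p q) :=
  Complex.ofRealCLM.contDiff.comp_contDiffOn (ha.deriv_of_isOpen isOpen_Ioo infle)

include ha hk hapos in
theorem smoothE : ∀ n, ContDiffOn ℝ (⊤:ℕ∞) (Ecoef a k n).1 (Set.Ioo p q)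
    ∧ ContDiffOn ℝ (⊤:ℕ∞) (Ecoef a k n).2 (Set.Ioo p q) := by
  intro n
  induction n with
  | zero =>
    constructor
    · exact myDiv hk.neg (hca ha) (hane hapos)
    · exact myDiv (hcda ha).neg (hca ha) (hane hapos)
  | succ n ih =>
    constructor
    · exact (ih.1.deriv_of_isOpen isOpen_Ioo infle).sub
        ((myDiv hk (hca ha) (hane hapos)).mul ih.2)
    · exact (ih.1.add (ih.2.deriv_of_isOpen isOpen_Ioo infle)).sub
        (((myDiv (hcda ha) (hca ha) (hane hapos))).mul ih.2)

include ha hk hapos in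
theorem smoothF : ∀ n m, ContDiffOn ℝ (⊤:ℕ∞) (Fcoef a k n m) (Set.Ioo p q) := by
  intro n
  induction n with
  | zero =>
    intro m
    match m with
    | 0 => exact myDiv (smoothE ha hk hapos 0).2 (hca ha) (hane hapos)
    | 1 => exact myDiv contDiffOn_const (hca ha) (hane hapos)
    | (m+2) => exact contDiffOn_const
  | succ n ih =>
    intro m
    match m with
    | 0 => exact myDiv (smoothE ha hk hapos (n+1)).2 (hca ha) (hane hapos)
    | (m+1) => exact ((ih (m+1)).deriv_of_isOpen isOpen_Ioo infle).add (ih m)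

theorem Fzero : ∀ n m, n + 2 ≤ m → Fcoef a k n m = (fun _ => (0:ℂ)) := by
  intro n
  induction n with
  | zero =>
    intro m hm
    match m, hm with
    | (m+2), _ => rfl
  | succ n ih =>
    intro m hm
    match m, hm with
    | (m+1), hm =>
      have h1 : n + 2 ≤ m + 1 := by omega
      have h2 : n + 2 ≤ m := by omega
      show (fun x => deriv (Fcoef a k n (m+1)) x + Fcoef a k n m x) = _
      rw [ih (m+1) h1, ih m h2]
      funext x
      simp

theorem diffAt {g : ℝ → ℂ} {v : Set ℝ} (hv : IsOpen v) (hg : ContDiffOn ℝ (⊤:ℕ∞) g v)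
    {x : ℝ} (hx : x ∈ v) : DifferentiableAt ℝ g x :=
  ((hg.differentiableOn (by norm_num)) x hx).differentiableAt (hv.mem_nhds hx)

theorem diffAtR {g : ℝ → ℝ} {v : Set ℝ} (hv : IsOpen v) (hg : ContDiffOn ℝ (⊤:ℕ∞) g v)
    {x : ℝ} (hx : x ∈ v) : DifferentiableAt ℝ g x :=
  ((hg.differentiableOn (by norm_num)) x hx).differentiableAt (hv.mem_nhds hx)

theorem diffAt_iteratedDeriv {g : ℝ → ℂ} {v : Set ℝ} (hv : IsOpen v)
    (hg : ContDiffOn ℝ (⊤:ℕ∞) g v) (m : ℕ) {x : ℝ} (hx : x ∈ v) :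
    DifferentiableAt ℝ (iteratedDeriv m g) x := by
  have hopen : ∀ y ∈ v, iteratedDerivWithin m g v y = iteratedDeriv m g y := by
    intro y hy
    rw [iteratedDerivWithin_eq_iteratedFDerivWithin, iteratedDeriv_eq_iteratedFDeriv,
      iteratedFDerivWithin_of_isOpen m hv hy]
  have h1 : DifferentiableWithinAt ℝ (iteratedDerivWithin m g v) v x :=
    hg.differentiableOn_iteratedDerivWithin (by exact_mod_cast WithTop.coe_lt_top m)
      hv.uniqueDiffOn x hx
  have h2 : DifferentiableAt ℝ (iteratedDerivWithin m g v) x :=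
    h1.differentiableAt (hv.mem_nhds hx)
  apply h2.congr_of_eventuallyEq
  filter_upwards [hv.mem_nhds hx] with y hy
  exact (hopen y hy).symm

theorem Fcoef_zero (n : ℕ) : Fcoef a k n 0 = fun x => (Ecoef a k n).2 x / (a x : ℂ) := by
  cases n <;> rfl

include ha hapos in
theorem keyId0 {f u : ℝ → ℂ}
    (hu : ContDiffOn ℝ (⊤:ℕ∞) u (Set.Ioo p q))
    (hode : ∀ x ∈ Set.Ioo p q, deriv (fun y => (a y : ℂ) * deriv u y) x + k x * u x = f x) :
    ∀ x ∈ Set.Ioo p q, deriv (deriv u) x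
      = -(k x)/(a x : ℂ) * u x + (-((deriv a x : ℝ):ℂ))/(a x : ℂ) * deriv u x
        + 1/(a x : ℂ) * f x := by
  intro x hx
  have hdu' : DifferentiableAt ℝ (deriv u) x :=
    diffAt isOpen_Ioo (hu.deriv_of_isOpen isOpen_Ioo infle) hx
  have hda : DifferentiableAt ℝ a x := diffAtR isOpen_Ioo ha hx
  have hprod : HasDerivAt (fun y => (a y : ℂ) * deriv u y)
      (((deriv a x : ℝ):ℂ) * deriv u x + (a x : ℂ) * deriv (deriv u) x) x :=
    HasDerivAt.mul (hda.hasDerivAt.ofReal_comp) (hdu'.hasDerivAt)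
  have hodeX := hode x hx
  rw [hprod.deriv] at hodeX
  have hne : (a x : ℂ) ≠ 0 := hane hapos x hx
  have h2 : deriv (deriv u) x = (f x - k x * u x - ((deriv a x : ℝ):ℂ) * deriv u x) / (a x : ℂ) := by
    rw [eq_div_iff hne]
    linear_combination hodeX
  rw [h2]
  field_simp
  ring

include ha hk hapos in
theorem keyId {f u : ℝ → ℂ} (hf : ContDiffOn ℝ (⊤:ℕ∞) f (Set.Ioo p q))
    (hu : ContDiffOn ℝ (⊤:ℕ∞) u (Set.Ioo p q))
    (hode : ∀ x ∈ Set.Ioo p q, deriv (fun y => (a y : ℂ) * deriv u y) x + k x * u x = f x) :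
    ∀ n, ∀ x ∈ Set.Ioo p q, iteratedDeriv (n+2) u x
      = (Ecoef a k n).1 x * u x + (Ecoef a k n).2 x * deriv u x
        + ∑ m ∈ Finset.range (n+1), Fcoef a k n (m+1) x * iteratedDeriv m f x := by
  intro n
  induction n with
  | zero =>
    intro x hx
    have h0 := keyId0 ha hapos hu hode x hx
    show iteratedDeriv (1+1) u x = _
    rw [iteratedDeriv_succ, iteratedDeriv_one, h0]
    show _ = -(k x)/(a x : ℂ) * u x + (-((deriv a x : ℝ):ℂ))/(a x : ℂ) * deriv u x
        + ∑ m ∈ Finset.range 1, Fcoef a k 0 (m+1) x * iteratedDeriv m f x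
    rw [Finset.sum_range_one]
    show _ = _ + _ + 1/(a x:ℂ) * iteratedDeriv 0 f x
    rw [iteratedDeriv_zero]
  | succ n ih =>
    intro x hx
    have hsO : IsOpen (Set.Ioo p q) := isOpen_Ioo
    have heq : iteratedDeriv (n+2) u =ᶠ[𝓝 x]
        (fun y => (Ecoef a k n).1 y * u y + (Ecoef a k n).2 y * deriv u y
          + ∑ m ∈ Finset.range (n+1), Fcoef a k n (m+1) y * iteratedDeriv m f y) := by
      filter_upwards [hsO.mem_nhds hx] with y hy using ih y hy
    have hE0 : HasDerivAt (Ecoef a k n).1 (deriv (Ecoef a k n).1 x) x :=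
      (diffAt hsO (smoothE ha hk hapos n).1 hx).hasDerivAt
    have hE1 : HasDerivAt (Ecoef a k n).2 (deriv (Ecoef a k n).2 x) x :=
      (diffAt hsO (smoothE ha hk hapos n).2 hx).hasDerivAt
    have hU : HasDerivAt u (deriv u x) x := (diffAt hsO hu hx).hasDerivAt
    have hU' : HasDerivAt (deriv u) (deriv (deriv u) x) x :=
      (diffAt hsO (hu.deriv_of_isOpen hsO infle) hx).hasDerivAt
    have hterm : ∀ m ∈ Finset.range (n+1),
        HasDerivAt (fun y => Fcoef a k n (m+1) y * iteratedDeriv m f y)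
          (deriv (Fcoef a k n (m+1)) x * iteratedDeriv m f x
            + Fcoef a k n (m+1) x * deriv (iteratedDeriv m f) x) x := by
      intro m _
      exact HasDerivAt.mul (diffAt hsO (smoothF ha hk hapos n (m+1)) hx).hasDerivAt
        (diffAt_iteratedDeriv hsO hf m hx).hasDerivAt
    have hRHS : HasDerivAt (fun y => (Ecoef a k n).1 y * u y + (Ecoef a k n).2 y * deriv u y
          + ∑ m ∈ Finset.range (n+1), Fcoef a k n (m+1) y * iteratedDeriv m f y)
        ((deriv (Ecoef a k n).1 x * u x + (Ecoef a k n).1 x * deriv u x)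
          + (deriv (Ecoef a k n).2 x * deriv u x + (Ecoef a k n).2 x * deriv (deriv u) x)
          + ∑ m ∈ Finset.range (n+1), (deriv (Fcoef a k n (m+1)) x * iteratedDeriv m f x
            + Fcoef a k n (m+1) x * deriv (iteratedDeriv m f) x)) x :=
      ((hE0.mul hU).add (hE1.mul hU')).add (HasDerivAt.fun_sum hterm)
    have hstep : iteratedDeriv (n+1+2) u x
        = (deriv (Ecoef a k n).1 x * u x + (Ecoef a k n).1 x * deriv u x)
          + (deriv (Ecoef a k n).2 x * deriv u x + (Ecoef a k n).2 x * deriv (deriv u) x)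
          + ∑ m ∈ Finset.range (n+1), (deriv (Fcoef a k n (m+1)) x * iteratedDeriv m f x
            + Fcoef a k n (m+1) x * deriv (iteratedDeriv m f) x) := by
      show iteratedDeriv ((n+2)+1) u x = _
      rw [iteratedDeriv_succ, heq.deriv_eq, hRHS.deriv]
    rw [hstep, keyId0 ha hapos hu hode x hx]
    show _ = (fun y => deriv (Ecoef a k n).1 y - k y / (a y : ℂ) * (Ecoef a k n).2 y) x * u x
      + (fun y => (Ecoef a k n).1 y + deriv (Ecoef a k n).2 y
          - ((deriv a y : ℝ) : ℂ) / (a y : ℂ) * (Ecoef a k n).2 y) x * deriv u x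
      + ∑ m ∈ Finset.range (n+2),
          (fun y => deriv (Fcoef a k n (m+1)) y + Fcoef a k n m y) x * iteratedDeriv m f x
    simp only []
    have hsplit : ∑ m ∈ Finset.range (n+2), (deriv (Fcoef a k n (m+1)) x + Fcoef a k n m x) * iteratedDeriv m f x
        = (∑ m ∈ Finset.range (n+2), deriv (Fcoef a k n (m+1)) x * iteratedDeriv m f x)
          + ∑ m ∈ Finset.range (n+2), Fcoef a k n m x * iteratedDeriv m f x := by
      rw [← Finset.sum_add_distrib]
      exact Finset.sum_congr rfl fun m _ => by ring
    have h1 : ∑ m ∈ Finset.range (n+2), deriv (Fcoef a k n (m+1)) x * iteratedDeriv m f x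
        = ∑ m ∈ Finset.range (n+1), deriv (Fcoef a k n (m+1)) x * iteratedDeriv m f x := by
      rw [Finset.sum_range_succ, Fzero n (n+2) le_rfl]
      simp
    have h2 : ∑ m ∈ Finset.range (n+2), Fcoef a k n m x * iteratedDeriv m f x
        = (∑ m ∈ Finset.range (n+1), Fcoef a k n (m+1) x * iteratedDeriv (m+1) f x)
          + (Ecoef a k n).2 x / (a x:ℂ) * f x := by
      rw [Finset.sum_range_succ' (fun m => Fcoef a k n m x * iteratedDeriv m f x) (n+1), Fcoef_zero]
      simp
    have hLHS : ∑ m ∈ Finset.range (n+1), (deriv (Fcoef a k n (m+1)) x * iteratedDeriv m f x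
          + Fcoef a k n (m+1) x * deriv (iteratedDeriv m f) x)
        = (∑ m ∈ Finset.range (n+1), deriv (Fcoef a k n (m+1)) x * iteratedDeriv m f x)
          + ∑ m ∈ Finset.range (n+1), Fcoef a k n (m+1) x * iteratedDeriv (m+1) f x := by
      rw [← Finset.sum_add_distrib]
      exact Finset.sum_congr rfl fun m _ => by rw [iteratedDeriv_succ]
    rw [hLHS, hsplit, h1, h2]
    ring

end ODE

lemma polyO : ∀ (n : ℕ) (Q : Polynomial ℂ),
    ((fun t : ℝ => Q.eval (t:ℂ)) =O[𝓝[≠] (0:ℝ)] fun t => t^n) → ∀ j < n, Q.coeff j = 0 := by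
  intro n
  induction n with
  | zero => intro Q h j hj; omega
  | succ n ih =>
    intro Q h j hj
    have hcont : Tendsto (fun t : ℝ => Q.eval (t:ℂ)) (𝓝[≠] (0:ℝ)) (𝓝 (Q.eval 0)) := by
      have : Continuous fun t : ℝ => Q.eval (t:ℂ) :=
        Q.continuous_aeval.comp Complex.continuous_ofReal
      simpa using (this.tendsto 0).mono_left nhdsWithin_le_nhds
    have hzero : Tendsto (fun t : ℝ => Q.eval (t:ℂ)) (𝓝[≠] (0:ℝ)) (𝓝 0) := by
      apply h.trans_tendsto
      have : Tendsto (fun t : ℝ => t^(n+1)) (𝓝 (0:ℝ)) (𝓝 ((0:ℝ)^(n+1))) :=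
        (continuous_pow (n+1)).tendsto 0
      simpa [zero_pow] using this.mono_left nhdsWithin_le_nhds
    have hc0 : Q.eval 0 = 0 := tendsto_nhds_unique hcont hzero
    have hQc0 : Q.coeff 0 = 0 := by rwa [Polynomial.coeff_zero_eq_eval_zero]
    have hfac : Q = Polynomial.X * Q.divX := by
      conv_lhs => rw [← Polynomial.X_mul_divX_add Q]
      rw [hQc0, map_zero, add_zero]
    have hdiv : (fun t : ℝ => Q.divX.eval (t:ℂ)) =O[𝓝[≠] (0:ℝ)] fun t => t^n := by
      rw [isBigO_iff] at h ⊢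
      obtain ⟨C, hC⟩ := h
      refine ⟨C, ?_⟩
      filter_upwards [hC, self_mem_nhdsWithin] with t h1 h2
      have ht : t ≠ 0 := h2
      have habs : (0:ℝ) < |t| := abs_pos.2 ht
      have heval : Q.eval (t:ℂ) = (t:ℂ) * Q.divX.eval (t:ℂ) := by
        conv_lhs => rw [hfac]
        simp
      rw [heval, norm_mul, Complex.norm_real, Real.norm_eq_abs] at h1
      rw [norm_pow, Real.norm_eq_abs] at h1 ⊢
      calc ‖Q.divX.eval (t:ℂ)‖ = (|t| * ‖Q.divX.eval (t:ℂ)‖) / |t| := by field_simp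
        _ ≤ (C * |t|^(n+1)) / |t| := by exact div_le_div_of_nonneg_right h1 habs.le
        _ = C * |t|^n := by rw [pow_succ]; field_simp
    match j with
    | 0 => exact hQc0
    | (i+1) =>
      rw [← Polynomial.coeff_divX]
      exact ih Q.divX hdiv i (by omega)

lemma ofRealPowO (m : ℕ) : (fun t : ℝ => ((t:ℂ))^m) =O[𝓝 (0:ℝ)] fun t => t^m := by
  apply isBigO_of_le
  intro t
  simp [norm_pow, Complex.norm_real]

lemma oddPartO {Q : Polynomial ℂ} {M : ℕ} (hM : Even M)
    (hvan : ∀ j < M, Q.coeff j = 0) :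
    (fun h : ℝ => (h:ℂ) * (Q.eval (h:ℂ) - Q.eval (-(h:ℂ)))) =O[𝓝 (0:ℝ)]
      fun h : ℝ => h^(M+2) := by
  obtain ⟨R, hR⟩ := (Polynomial.X_pow_dvd_iff.2 hvan)
  have heq : (fun h : ℝ => (h:ℂ) * (Q.eval (h:ℂ) - Q.eval (-(h:ℂ))))
      = fun h : ℝ => ((h:ℂ))^(M+1) * (R.eval (h:ℂ) - R.eval (-(h:ℂ))) := by
    funext h
    rw [hR]
    simp only [Polynomial.eval_mul, Polynomial.eval_pow, Polynomial.eval_X]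
    rw [hM.neg_pow]
    ring
  rw [heq]
  have hdiff : DifferentiableAt ℝ (fun t : ℝ => R.eval (t:ℂ) - R.eval (-(t:ℂ))) 0 := by
    apply DifferentiableAt.sub
    · exact (R.differentiableAt.restrictScalars ℝ).comp 0
        (Complex.ofRealCLM.differentiable.differentiableAt)
    · exact (R.differentiableAt.restrictScalars ℝ).comp 0
        ((Complex.ofRealCLM.differentiable.differentiableAt).neg)
  have hO1 : (fun t : ℝ => R.eval (t:ℂ) - R.eval (-(t:ℂ))) =O[𝓝 (0:ℝ)] fun t => t := by
    have := hdiff.isBigO_sub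
    simpa using this
  have := (ofRealPowO (M+1)).mul hO1
  have h2 : (fun h : ℝ => h^(M+1) * h) = fun h : ℝ => h^(M+2) := by
    funext h
    rw [← pow_succ]
  rwa [h2] at this

lemma peel2 (n : ℕ) (g : ℕ → ℂ) :
    ∑ j ∈ Finset.range (n+2), g j = g 0 + g 1 + ∑ i ∈ Finset.range n, g (i+2) := by
  induction n with
  | zero => simp [Finset.sum_range_succ]
  | succ n ih =>
    rw [show n+1+2 = (n+2)+1 from rfl, Finset.sum_range_succ, ih, Finset.sum_range_succ]
    ring

lemma triswap (N : ℕ) (g : ℕ → ℕ → ℂ) :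
    ∑ i ∈ Finset.range N, ∑ m ∈ Finset.range (i+1), g i m
      = ∑ ℓ ∈ Finset.range N, ∑ i ∈ Finset.range (N-ℓ), g (ℓ+i) ℓ := by
  have step1 : ∀ i ∈ Finset.range N, ∑ m ∈ Finset.range (i+1), g i m
      = ∑ m ∈ Finset.range N, if m ≤ i then g i m else 0 := by
    intro i hi
    rw [Finset.sum_ite, Finset.sum_const_zero, add_zero]
    apply Finset.sum_congr _ (fun _ _ => rfl)
    ext m
    simp only [Finset.mem_range, Finset.mem_filter]
    have := Finset.mem_range.1 hi
    omega
  rw [Finset.sum_congr rfl step1, Finset.sum_comm]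
  apply Finset.sum_congr rfl
  intro ℓ hℓ
  rw [Finset.sum_ite, Finset.sum_const_zero, add_zero]
  have hfil : (Finset.range N).filter (fun i => ℓ ≤ i) = Finset.Ico ℓ N := by
    ext i
    simp only [Finset.mem_range, Finset.mem_filter, Finset.mem_Ico]
    omega
  rw [hfil, Finset.sum_Ico_eq_sum_range]

lemma regroup (N : ℕ) (u0 u1 : ℂ) (e0 e1 : ℕ → ℂ) (F : ℕ → ℕ → ℂ) (fl : ℕ → ℂ) (U : ℕ → ℂ)
    (hU0 : U 0 = u0) (hU1 : U 1 = u1)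
    (hU : ∀ i < N + 1, U (i+2) = e0 i * u0 + e1 i * u1
      + ∑ m ∈ Finset.range (i+1), F i (m+1) * fl m)
    (h : ℝ) :
    ∑ j ∈ Finset.range (N+3), (h:ℂ)^j / (Nat.factorial j : ℂ) * U j
      = (1 + ∑ i ∈ Finset.range N, e0 i * (h:ℂ)^(i+2)/(Nat.factorial (i+2) : ℂ)) * u0
        + (h:ℂ) * (1 + ∑ i ∈ Finset.range N, e1 i * (h:ℂ)^(i+1)/(Nat.factorial (i+2) : ℂ)) * u1
        + (∑ ℓ ∈ Finset.range N, (h:ℂ)^(ℓ+2)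
            * (∑ i ∈ Finset.range (N-ℓ), F (ℓ+i) (ℓ+1) * (h:ℂ)^i/(Nat.factorial (ℓ+2+i) : ℂ)) * fl ℓ)
        + (h:ℂ)^(N+2)/(Nat.factorial (N+2) : ℂ)
            * (e0 N * u0 + e1 N * u1 + ∑ m ∈ Finset.range (N+1), F N (m+1) * fl m) := by
  rw [show N+3 = (N+1)+2 from rfl,
    peel2 (N+1) (fun j => (h:ℂ)^j / (Nat.factorial j : ℂ) * U j)]
  simp only [pow_zero, pow_one, Nat.factorial_zero, Nat.factorial_one, Nat.cast_one, div_one,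
    one_mul, hU0, hU1]
  have hsub : (∑ i ∈ Finset.range (N+1), (h:ℂ)^(i+2) / (Nat.factorial (i+2) : ℂ) * U (i+2))
      = ∑ i ∈ Finset.range (N+1), (h:ℂ)^(i+2) / (Nat.factorial (i+2) : ℂ)
          * (e0 i * u0 + e1 i * u1 + ∑ m ∈ Finset.range (i+1), F i (m+1) * fl m) :=
    Finset.sum_congr rfl (fun i hi => by rw [hU i (Finset.mem_range.1 hi)])
  rw [hsub, Finset.sum_range_succ]
  have hsplit : ∑ i ∈ Finset.range N, (h:ℂ)^(i+2) / (Nat.factorial (i+2):ℂ)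
        * (e0 i * u0 + e1 i * u1 + ∑ m ∈ Finset.range (i+1), F i (m+1) * fl m)
      = (∑ i ∈ Finset.range N, (h:ℂ)^(i+2) / (Nat.factorial (i+2):ℂ) * (e0 i * u0))
        + (∑ i ∈ Finset.range N, (h:ℂ)^(i+2) / (Nat.factorial (i+2):ℂ) * (e1 i * u1))
        + ∑ i ∈ Finset.range N, (h:ℂ)^(i+2) / (Nat.factorial (i+2):ℂ)
            * ∑ m ∈ Finset.range (i+1), F i (m+1) * fl m := by
    rw [← Finset.sum_add_distrib, ← Finset.sum_add_distrib]
    exact Finset.sum_congr rfl fun i _ => by ring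
  rw [hsplit]
  have hA : (∑ i ∈ Finset.range N, (h:ℂ)^(i+2) / (Nat.factorial (i+2):ℂ) * (e0 i * u0))
      = (∑ i ∈ Finset.range N, e0 i * (h:ℂ)^(i+2)/(Nat.factorial (i+2) : ℂ)) * u0 := by
    rw [Finset.sum_mul]
    exact Finset.sum_congr rfl fun i _ => by ring
  have hB : (∑ i ∈ Finset.range N, (h:ℂ)^(i+2) / (Nat.factorial (i+2):ℂ) * (e1 i * u1))
      = (∑ i ∈ Finset.range N, e1 i * (h:ℂ)^(i+1)/(Nat.factorial (i+2) : ℂ)) * ((h:ℂ) * u1) := by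
    rw [Finset.sum_mul]
    exact Finset.sum_congr rfl fun i _ => by ring
  have htri : (∑ i ∈ Finset.range N, (h:ℂ)^(i+2) / (Nat.factorial (i+2):ℂ)
        * ∑ m ∈ Finset.range (i+1), F i (m+1) * fl m)
      = ∑ ℓ ∈ Finset.range N, (h:ℂ)^(ℓ+2)
          * (∑ i ∈ Finset.range (N-ℓ), F (ℓ+i) (ℓ+1) * (h:ℂ)^i/(Nat.factorial (ℓ+2+i) : ℂ)) * fl ℓ := by
    have hmul : (∑ i ∈ Finset.range N, (h:ℂ)^(i+2) / (Nat.factorial (i+2):ℂ)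
          * ∑ m ∈ Finset.range (i+1), F i (m+1) * fl m)
        = ∑ i ∈ Finset.range N, ∑ m ∈ Finset.range (i+1),
            (h:ℂ)^(i+2) / (Nat.factorial (i+2):ℂ) * (F i (m+1) * fl m) :=
      Finset.sum_congr rfl fun i _ => by rw [Finset.mul_sum]
    rw [hmul, triswap N (fun i m => (h:ℂ)^(i+2) / (Nat.factorial (i+2):ℂ) * (F i (m+1) * fl m))]
    apply Finset.sum_congr rfl
    intro ℓ _
    rw [Finset.mul_sum, Finset.sum_mul]
    apply Finset.sum_congr rfl
    intro i _
    rw [show ℓ+i+2 = ℓ+2+i by omega, show (h:ℂ)^(ℓ+2+i) = (h:ℂ)^(ℓ+2) * (h:ℂ)^i from by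
      rw [← pow_add]]
    ring
  rw [hA, hB, htri]
  ring

/-- The polynomial whose evaluation is `𝔈₁`. -/
noncomputable def E1pol (a : ℝ → ℝ) (k : ℝ → ℂ) (xb : ℝ) (B : ℕ) : Polynomial ℂ :=
  Polynomial.C 1 + ∑ j ∈ Finset.Icc 2 B,
    Polynomial.C (Ej1 a k j xb / (Nat.factorial j : ℂ)) * Polynomial.X^(j-1)

lemma E1pol_eval (a : ℝ → ℝ) (k : ℝ → ℂ) (xb : ℝ) (B : ℕ) (z : ℂ) :
    (E1pol a k xb B).eval z = 1 + ∑ j ∈ Finset.Icc 2 B, Ej1 a k j xb * z^(j-1) / (Nat.factorial j : ℂ) := by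
  rw [E1pol]
  simp only [Polynomial.eval_add, Polynomial.eval_C, Polynomial.eval_finset_sum,
    Polynomial.eval_mul, Polynomial.eval_pow, Polynomial.eval_X]
  congr 1
  exact Finset.sum_congr rfl fun j _ => by ring

end Aux

/-- the particular compact scheme (3.10)–(3.11) of the paper.  Let `M ≥ 2`
be even, and let `p` be the (unique) polynomial of degree at most `M−1` with
`p(h)·𝔈₁(h) − 1 = O(h^M)`.  Then the compact scheme with coefficients
`c₁(h) = −p(h)`, `c₋₁(h) = −p(−h)`, `c₀(h) = p(h)𝔈₀(h) + p(−h)𝔈₀(−h)` and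
`d_ℓ(h) = −δ_{ℓ0} − p(h)𝔉_ℓ(h) − (−1)^ℓ p(−h)𝔉_ℓ(−h)` has accuracy order `M` at `x_b`:
the (`h²`-scaled) truncation error is `O(h^{M+2})` for every smooth solution of
`(a u')' + k u = f` on `I`. -/
theorem particular_compact_scheme_accuracy_order
    (p q : ℝ) (a : ℝ → ℝ) (k f : ℝ → ℂ)
    (ha : ContDiffOn ℝ (⊤ : ℕ∞) a (Set.Ioo p q))
    (hk : ContDiffOn ℝ (⊤ : ℕ∞) k (Set.Ioo p q))
    (hf : ContDiffOn ℝ (⊤ : ℕ∞) f (Set.Ioo p q))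
    (hapos : ∀ x ∈ Set.Ioo p q, 0 < a x)
    (xb : ℝ) (hxb : xb ∈ Set.Ioo p q) (M : ℕ) (hM : 2 ≤ M) (hMeven : Even M)
    (P : Polynomial ℂ) (hPdeg : P.natDegree ≤ M - 1)
    (hP : (fun h : ℝ => Polynomial.eval ((h : ℂ)) P * EPoly1 a k xb M h - 1)
      =O[𝓝 (0 : ℝ)] fun h : ℝ => h ^ M) :
    ∀ u : ℝ → ℂ, ContDiffOn ℝ (⊤ : ℕ∞) u (Set.Ioo p q) →
      (∀ x ∈ Set.Ioo p q, deriv (fun y => (a y : ℂ) * deriv u y) x + k x * u x = f x) →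
      (fun h : ℝ =>
          (-Polynomial.eval (-(h : ℂ)) P) * u (xb - h)
          + (Polynomial.eval ((h : ℂ)) P * EPoly0 a k xb M h
              + Polynomial.eval (-(h : ℂ)) P * EPoly0 a k xb M (-h)) * u xb
          + (-Polynomial.eval ((h : ℂ)) P) * u (xb + h)
          - (h : ℂ) ^ 2 * ∑ ℓ ∈ Finset.range (M - 1),
              (-(if ℓ = 0 then 1 else 0)
                - Polynomial.eval ((h : ℂ)) P * FPoly a k xb ℓ M h
                - (-1 : ℂ) ^ ℓ * Polynomial.eval (-(h : ℂ)) P * FPoly a k xb ℓ M (-h))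
                * (h : ℂ) ^ ℓ * iteratedDeriv ℓ f xb
          - (h : ℂ) ^ 2 * f xb)
        =O[𝓝 (0 : ℝ)] fun h : ℝ => h ^ (M + 2) := by
  intro u hu hode
  obtain ⟨N, rfl⟩ : ∃ N, M = N + 1 := ⟨M - 1, by omega⟩
  have hN : 1 ≤ N := by omega
  have hOpen : IsOpen (Set.Ioo p q) := isOpen_Ioo
  simp only [Nat.add_sub_cancel] at hPdeg ⊢
  -- the Taylor remainder
  set Rem : ℝ → ℂ := fun h => u (xb + h)
      - ∑ j ∈ Finset.range (N+3), (h:ℂ)^j / (Nat.factorial j : ℂ) * iteratedDeriv j u xb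
    with hRemDef
  have hRemO : Rem =O[𝓝 (0:ℝ)] fun h : ℝ => h^(N+3) := taylorO hOpen hu hxb (N+2)
  -- conversion of the polynomials to `range` form
  have hE0conv : ∀ h : ℝ, EPoly0 a k xb (N+1) h
      = 1 + ∑ i ∈ Finset.range N, (Ecoef a k i).1 xb * (h:ℂ)^(i+2)/(Nat.factorial (i+2) : ℂ) := by
    intro h
    rw [EPoly0, ← Finset.Ico_add_one_right_eq_Icc, Finset.sum_Ico_eq_sum_range, show N+1+1-2 = N by omega]
    congr 1
    refine Finset.sum_congr rfl fun i _ => ?_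
    rw [show 2+i = i+2 by omega]
    rfl
  have hE1conv : ∀ h : ℝ, EPoly1 a k xb (N+1) h
      = 1 + ∑ i ∈ Finset.range N, (Ecoef a k i).2 xb * (h:ℂ)^(i+1)/(Nat.factorial (i+2) : ℂ) := by
    intro h
    rw [EPoly1, ← Finset.Ico_add_one_right_eq_Icc, Finset.sum_Ico_eq_sum_range, show N+1+1-2 = N by omega]
    congr 1
    refine Finset.sum_congr rfl fun i _ => ?_
    rw [show 2+i = i+2 by omega]
    rfl
  have hFconv : ∀ (h : ℝ) (ℓ : ℕ), FPoly a k xb ℓ (N+1) h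
      = ∑ i ∈ Finset.range (N-ℓ), Fcoef a k (ℓ+i) (ℓ+1) xb * (h:ℂ)^i/(Nat.factorial (ℓ+2+i) : ℂ) := by
    intro h ℓ
    rw [FPoly, ← Finset.Ico_add_one_right_eq_Icc, Finset.sum_Ico_eq_sum_range, show N+1+1-(ℓ+2) = N-ℓ by omega]
    refine Finset.sum_congr rfl fun i _ => ?_
    rw [show ℓ+2+i-ℓ-2 = i by omega, show ℓ+2+i = (ℓ+i)+2 by omega]
    rfl
  -- key expansion of u(xb + h)
  have hkey := keyId ha hk hapos hf hu hode
  have hS : ∀ h : ℝ, u (xb + h)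
      = EPoly0 a k xb (N+1) h * u xb + (h:ℂ) * EPoly1 a k xb (N+1) h * deriv u xb
        + (∑ ℓ ∈ Finset.range N, (h:ℂ)^(ℓ+2) * FPoly a k xb ℓ (N+1) h * iteratedDeriv ℓ f xb)
        + (h:ℂ)^(N+2)/(Nat.factorial (N+2) : ℂ)
            * ((Ecoef a k N).1 xb * u xb + (Ecoef a k N).2 xb * deriv u xb
              + ∑ m ∈ Finset.range (N+1), Fcoef a k N (m+1) xb * iteratedDeriv m f xb)
        + Rem h := by
    intro h
    have h1 : u (xb + h) = (∑ j ∈ Finset.range (N+3),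
        (h:ℂ)^j / (Nat.factorial j : ℂ) * iteratedDeriv j u xb) + Rem h := by
      rw [hRemDef]
      ring
    have hreg := regroup N (u xb) (deriv u xb) (fun i => (Ecoef a k i).1 xb)
      (fun i => (Ecoef a k i).2 xb) (fun i m => Fcoef a k i m xb)
      (fun ℓ => iteratedDeriv ℓ f xb) (fun j => iteratedDeriv j u xb)
      (by simp) (by show iteratedDeriv 1 u xb = deriv u xb; rw [iteratedDeriv_one]) (fun i _ => hkey i xb hxb) h
    rw [h1, hreg, ← hE0conv h, ← hE1conv h]
    have hFs : (∑ ℓ ∈ Finset.range N, (h:ℂ)^(ℓ+2)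
          * (∑ i ∈ Finset.range (N-ℓ), Fcoef a k (ℓ+i) (ℓ+1) xb * (h:ℂ)^i/(Nat.factorial (ℓ+2+i) : ℂ))
          * iteratedDeriv ℓ f xb)
        = ∑ ℓ ∈ Finset.range N, (h:ℂ)^(ℓ+2) * FPoly a k xb ℓ (N+1) h * iteratedDeriv ℓ f xb :=
      Finset.sum_congr rfl fun ℓ _ => by rw [hFconv h ℓ]
    rw [hFs]
  -- polynomial asymptotics
  have hQ0van : ∀ j < N+1, ((P * E1pol a k xb (N+1) - 1 : Polynomial ℂ)).coeff j = 0 := by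
    apply polyO
    have hmatch : (fun t : ℝ => ((P * E1pol a k xb (N+1) - 1 : Polynomial ℂ)).eval (t:ℂ))
        = fun t : ℝ => Polynomial.eval ((t:ℂ)) P * EPoly1 a k xb (N+1) t - 1 := by
      funext t
      rw [Polynomial.eval_sub, Polynomial.eval_mul, Polynomial.eval_one, E1pol_eval, EPoly1]
    rw [hmatch]
    exact hP.mono nhdsWithin_le_nhds
  have hE1negconv : ∀ h : ℝ, EPoly1 a k xb (N+1) (-h) = (E1pol a k xb (N+1)).eval (-(h:ℂ)) := by
    intro h
    rw [E1pol_eval, EPoly1]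
    congr 1
    refine Finset.sum_congr rfl fun j _ => ?_
    push_cast
    ring
  have hQd : (fun h : ℝ => (h:ℂ) * (Polynomial.eval ((h:ℂ)) P * EPoly1 a k xb (N+1) h
        - Polynomial.eval (-(h:ℂ)) P * EPoly1 a k xb (N+1) (-h)))
      =O[𝓝 (0:ℝ)] fun h : ℝ => h^(N+3) := by
    have hODD := oddPartO hMeven hQ0van
    have heq2 : (fun h : ℝ => (h:ℂ) * (Polynomial.eval ((h:ℂ)) P * EPoly1 a k xb (N+1) h
          - Polynomial.eval (-(h:ℂ)) P * EPoly1 a k xb (N+1) (-h)))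
        = fun h : ℝ => (h:ℂ) * ((P * E1pol a k xb (N+1) - 1).eval ((h:ℂ))
          - (P * E1pol a k xb (N+1) - 1).eval (-(h:ℂ))) := by
      funext h
      rw [Polynomial.eval_sub, Polynomial.eval_mul, Polynomial.eval_one,
        Polynomial.eval_sub, Polynomial.eval_mul, Polynomial.eval_one,
        hE1negconv h]
      have : EPoly1 a k xb (N+1) h = (E1pol a k xb (N+1)).eval ((h:ℂ)) := by
        rw [E1pol_eval, EPoly1]
      rw [this]
      ring
    rw [heq2]
    exact hODD
  have hPdiff : (fun h : ℝ => Polynomial.eval ((h:ℂ)) P - Polynomial.eval (-(h:ℂ)) P)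
      =O[𝓝 (0:ℝ)] fun h : ℝ => h := by
    have hd : DifferentiableAt ℝ (fun h : ℝ => Polynomial.eval ((h:ℂ)) P
        - Polynomial.eval (-(h:ℂ)) P) 0 := by
      apply DifferentiableAt.sub
      · exact (P.differentiableAt.restrictScalars ℝ).comp 0
          (Complex.ofRealCLM.differentiable.differentiableAt)
      · exact (P.differentiableAt.restrictScalars ℝ).comp 0
          ((Complex.ofRealCLM.differentiable.differentiableAt).neg)
    have := hd.isBigO_sub
    simpa using this
  have hPk : (fun h : ℝ => ((h:ℂ))^(N+2) * (Polynomial.eval ((h:ℂ)) P - Polynomial.eval (-(h:ℂ)) P))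
      =O[𝓝 (0:ℝ)] fun h : ℝ => h^(N+3) := by
    have := (ofRealPowO (N+2)).mul hPdiff
    have h2 : (fun h : ℝ => h^(N+2) * h) = fun h : ℝ => h^(N+3) := by
      funext h
      rw [← pow_succ]
    rwa [h2] at this
  have hPb : (fun h : ℝ => Polynomial.eval ((h:ℂ)) P) =O[𝓝 (0:ℝ)] (fun _ : ℝ => (1:ℝ)) := by
    exact ((P.continuous_aeval.comp Complex.continuous_ofReal).tendsto 0).isBigO_one ℝ
  have hPmb : (fun h : ℝ => Polynomial.eval (-(h:ℂ)) P) =O[𝓝 (0:ℝ)] (fun _ : ℝ => (1:ℝ)) := by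
    exact ((P.continuous_aeval.comp (Complex.continuous_ofReal.neg)).tendsto 0).isBigO_one ℝ
  have hRemNeg : (fun h : ℝ => Rem (-h)) =O[𝓝 (0:ℝ)] fun h : ℝ => h^(N+3) := by
    have h1 : Filter.Tendsto (fun h : ℝ => -h) (𝓝 0) (𝓝 (0:ℝ)) := by
      simpa using (continuous_neg.tendsto (0:ℝ))
    have h2 := hRemO.comp_tendsto h1
    apply h2.trans
    apply isBigO_of_le
    intro h
    simp only [Function.comp_apply, norm_pow, Real.norm_eq_abs, abs_neg]
    exact le_rfl
  -- combine the four error terms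
  have t1 : (fun h : ℝ => (-(deriv u xb)) * ((h:ℂ) * (Polynomial.eval ((h:ℂ)) P * EPoly1 a k xb (N+1) h
        - Polynomial.eval (-(h:ℂ)) P * EPoly1 a k xb (N+1) (-h))))
      =O[𝓝 (0:ℝ)] fun h : ℝ => h^(N+3) := hQd.const_mul_left _
  have t2 : (fun h : ℝ => (-(((Ecoef a k N).1 xb * u xb + (Ecoef a k N).2 xb * deriv u xb
        + ∑ m ∈ Finset.range (N+1), Fcoef a k N (m+1) xb * iteratedDeriv m f xb)
          / (Nat.factorial (N+2) : ℂ)))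
        * (((h:ℂ))^(N+2) * (Polynomial.eval ((h:ℂ)) P - Polynomial.eval (-(h:ℂ)) P)))
      =O[𝓝 (0:ℝ)] fun h : ℝ => h^(N+3) := hPk.const_mul_left _
  have t3 : (fun h : ℝ => (-Polynomial.eval ((h:ℂ)) P) * Rem h)
      =O[𝓝 (0:ℝ)] fun h : ℝ => h^(N+3) := by
    have := (hPb.neg_left).mul hRemO
    have h2 : (fun h : ℝ => (1:ℝ) * h^(N+3)) = fun h : ℝ => h^(N+3) := by
      funext h
      rw [one_mul]
    rwa [h2] at this
  have t4 : (fun h : ℝ => (-Polynomial.eval (-(h:ℂ)) P) * Rem (-h))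
      =O[𝓝 (0:ℝ)] fun h : ℝ => h^(N+3) := by
    have := (hPmb.neg_left).mul hRemNeg
    have h2 : (fun h : ℝ => (1:ℝ) * h^(N+3)) = fun h : ℝ => h^(N+3) := by
      funext h
      rw [one_mul]
    rwa [h2] at this
  have hsum := ((t1.add t2).add t3).add t4
  -- the truncation error is exactly the sum of the four error terms
  have hfun : (fun h : ℝ =>
          (-Polynomial.eval (-(h : ℂ)) P) * u (xb - h)
          + (Polynomial.eval ((h : ℂ)) P * EPoly0 a k xb (N+1) h
              + Polynomial.eval (-(h : ℂ)) P * EPoly0 a k xb (N+1) (-h)) * u xb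
          + (-Polynomial.eval ((h : ℂ)) P) * u (xb + h)
          - (h : ℂ) ^ 2 * ∑ ℓ ∈ Finset.range N,
              (-(if ℓ = 0 then 1 else 0)
                - Polynomial.eval ((h : ℂ)) P * FPoly a k xb ℓ (N+1) h
                - (-1 : ℂ) ^ ℓ * Polynomial.eval (-(h : ℂ)) P * FPoly a k xb ℓ (N+1) (-h))
                * (h : ℂ) ^ ℓ * iteratedDeriv ℓ f xb
          - (h : ℂ) ^ 2 * f xb)
      = fun h : ℝ =>
          (-(deriv u xb)) * ((h:ℂ) * (Polynomial.eval ((h:ℂ)) P * EPoly1 a k xb (N+1) h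
            - Polynomial.eval (-(h:ℂ)) P * EPoly1 a k xb (N+1) (-h)))
          + (-(((Ecoef a k N).1 xb * u xb + (Ecoef a k N).2 xb * deriv u xb
              + ∑ m ∈ Finset.range (N+1), Fcoef a k N (m+1) xb * iteratedDeriv m f xb)
                / (Nat.factorial (N+2) : ℂ)))
              * (((h:ℂ))^(N+2) * (Polynomial.eval ((h:ℂ)) P - Polynomial.eval (-(h:ℂ)) P))
          + (-Polynomial.eval ((h:ℂ)) P) * Rem h
          + (-Polynomial.eval (-(h:ℂ)) P) * Rem (-h) := by
    funext h
    rw [show xb - h = xb + (-h) by ring, hS h, hS (-h)]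
    push_cast
    rw [show ((-(h:ℂ)))^(N+2) = -((h:ℂ)^(N+2)) from (hMeven.add_one).neg_pow _]
    have hd : ∑ ℓ ∈ Finset.range N,
          (-(if ℓ = 0 then (1:ℂ) else 0)
            - Polynomial.eval ((h : ℂ)) P * FPoly a k xb ℓ (N+1) h
            - (-1 : ℂ) ^ ℓ * Polynomial.eval (-(h : ℂ)) P * FPoly a k xb ℓ (N+1) (-h))
            * (h : ℂ) ^ ℓ * iteratedDeriv ℓ f xb
        = -(∑ ℓ ∈ Finset.range N, (if ℓ = 0 then (1:ℂ) else 0) * (h:ℂ)^ℓ * iteratedDeriv ℓ f xb)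
          - ∑ ℓ ∈ Finset.range N, Polynomial.eval ((h : ℂ)) P * FPoly a k xb ℓ (N+1) h
              * (h:ℂ)^ℓ * iteratedDeriv ℓ f xb
          - ∑ ℓ ∈ Finset.range N, (-1 : ℂ) ^ ℓ * Polynomial.eval (-(h : ℂ)) P
              * FPoly a k xb ℓ (N+1) (-h) * (h:ℂ)^ℓ * iteratedDeriv ℓ f xb := by
      rw [Finset.sum_congr rfl (fun ℓ _ => by
        ring :
        ∀ ℓ ∈ Finset.range N,
          (-(if ℓ = 0 then (1:ℂ) else 0)
            - Polynomial.eval ((h : ℂ)) P * FPoly a k xb ℓ (N+1) h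
            - (-1 : ℂ) ^ ℓ * Polynomial.eval (-(h : ℂ)) P * FPoly a k xb ℓ (N+1) (-h))
            * (h : ℂ) ^ ℓ * iteratedDeriv ℓ f xb
          = (-((if ℓ = 0 then (1:ℂ) else 0) * (h:ℂ)^ℓ * iteratedDeriv ℓ f xb))
            - Polynomial.eval ((h : ℂ)) P * FPoly a k xb ℓ (N+1) h * (h:ℂ)^ℓ * iteratedDeriv ℓ f xb
            - (-1 : ℂ) ^ ℓ * Polynomial.eval (-(h : ℂ)) P * FPoly a k xb ℓ (N+1) (-h)
                * (h:ℂ)^ℓ * iteratedDeriv ℓ f xb)]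
      rw [Finset.sum_sub_distrib, Finset.sum_sub_distrib, Finset.sum_neg_distrib]
    rw [hd]
    have hone : ∑ ℓ ∈ Finset.range N, (if ℓ = 0 then (1:ℂ) else 0) * (h:ℂ)^ℓ
          * iteratedDeriv ℓ f xb = f xb := by
      rw [Finset.sum_eq_single 0]
      · simp
      · intro b _ hb
        simp [hb]
      · intro habs
        exact absurd (Finset.mem_range.2 (by omega)) habs
    rw [hone]
    have hP2 : ((h:ℂ))^2 * ∑ ℓ ∈ Finset.range N, Polynomial.eval ((h : ℂ)) P
          * FPoly a k xb ℓ (N+1) h * (h:ℂ)^ℓ * iteratedDeriv ℓ f xb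
        = Polynomial.eval ((h : ℂ)) P * ∑ ℓ ∈ Finset.range N, (h:ℂ)^(ℓ+2)
            * FPoly a k xb ℓ (N+1) h * iteratedDeriv ℓ f xb := by
      rw [Finset.mul_sum, Finset.mul_sum]
      refine Finset.sum_congr rfl fun ℓ _ => ?_
      rw [pow_add]
      ring
    have hP3 : ((h:ℂ))^2 * ∑ ℓ ∈ Finset.range N, (-1 : ℂ) ^ ℓ * Polynomial.eval (-(h : ℂ)) P
          * FPoly a k xb ℓ (N+1) (-h) * (h:ℂ)^ℓ * iteratedDeriv ℓ f xb
        = Polynomial.eval (-(h : ℂ)) P * ∑ ℓ ∈ Finset.range N, (-(h:ℂ))^(ℓ+2)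
            * FPoly a k xb ℓ (N+1) (-h) * iteratedDeriv ℓ f xb := by
      rw [Finset.mul_sum, Finset.mul_sum]
      refine Finset.sum_congr rfl fun ℓ _ => ?_
      rw [neg_pow ((h:ℂ)) (ℓ+2), pow_add]
      ring
    linear_combination hP2 + hP3
  rw [hfun]
  exact hsum
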